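/- Suppose ⟨f_α : α < η⟩ is <*-increasing in ∏_n τ_n, β < η is a limit with uncountable cofinality, and f_β is an exact upper bound of ⟨f_α : α < β⟩ (i.e., the sequence is continuous at β). If N is internally approachable with β = sup(N ∩ η) and the whole sequence ⟨f_α : α < η⟩ ∈ N, and ⟨f_α : α < β⟩ is cofinally interleaved with ∏_n χ_N(τ_n), then f_β(n) = χ_N(τ_n) for all but finitely many n. -/

import Mathlib

/-- `f <* g` : eventual (mod finite) domination. -/
def evDom (f g : ℕ → Ordinal) : Prop := ∀ᶠ n in Filter.atTop, f n < g n

/-- Lemma lem:IAcharFunc: if f_β is an exact upper bound of the sequence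
below β (continuity at β, cf(β) > ω), β = sup(N ∩ η), and the sequence below β is
cofinally interleaved with ∏ₙ χ_N(τₙ), then f_β(n) = χ_N(τₙ) for almost all n. -/
theorem ia_char_eq_continuity_point
    (τ : ℕ → Ordinal) (η β : Ordinal) (f : Ordinal → ℕ → Ordinal) (N : Set Ordinal)
    (hβ : β < η) (hβlim : Order.IsSuccLimit β) (hβcof : Cardinal.aleph0 < β.cof)
    (hinc : ∀ α γ, α < γ → γ < η → evDom (f α) (f γ))
    (hub : ∀ α < β, evDom (f α) (f β))
    (heub : ∀ g : ℕ → Ordinal, evDom g (f β) → ∃ α < β, evDom g (f α))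
    (hβsup : β = sSup (N ∩ Set.Iio η))
    (hinter₁ : ∀ α < β, ∃ g : ℕ → Ordinal,
      (∀ n, g n < sSup (N ∩ Set.Iio (τ n))) ∧ evDom (f α) g)
    (hinter₂ : ∀ g : ℕ → Ordinal,
      (∀ n, g n < sSup (N ∩ Set.Iio (τ n))) → ∃ α < β, evDom g (f α)) :
    ∀ᶠ n in Filter.atTop, f β n = sSup (N ∩ Set.Iio (τ n)) := by
  set χ : ℕ → Ordinal := fun n => sSup (N ∩ Set.Iio (τ n)) with hχdef
  have hα0 : (0 : Ordinal) < β := hβlim.pos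
  obtain ⟨g0, hg0, _⟩ := hinter₁ 0 hα0
  have hχpos : ∀ n, 0 < χ n := fun n => zero_le.trans_lt (hg0 n)
  have hfβpos : ∀ᶠ n in Filter.atTop, 0 < f β n := by
    filter_upwards [hub 0 hα0] with n h
    exact zero_le.trans_lt h
  have h1 : ∀ᶠ n in Filter.atTop, f β n ≤ χ n := by
    by_contra hcon
    rw [Filter.not_eventually] at hcon
    simp only [not_le] at hcon
    set g : ℕ → Ordinal := fun n => if χ n < f β n then χ n else 0 with hgdef
    have hg : evDom g (f β) := by
      filter_upwards [hfβpos] with n hn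
      by_cases h : χ n < f β n <;> simp [hgdef, h, hn]
    obtain ⟨α, hαβ, hgα⟩ := heub g hg
    obtain ⟨h, hh, hαh⟩ := hinter₁ α hαβ
    obtain ⟨n, hn1, hn2, hn3⟩ := (hcon.and_eventually (hgα.and hαh)).exists
    have hgn : g n = χ n := if_pos hn1
    exact absurd ((hgn ▸ hn2).trans (hn3.trans (hh n))) (lt_irrefl _)
  have h2 : ∀ᶠ n in Filter.atTop, χ n ≤ f β n := by
    by_contra hcon
    rw [Filter.not_eventually] at hcon
    simp only [not_le] at hcon
    set g : ℕ → Ordinal := fun n => if f β n < χ n then f β n else 0 with hgdef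
    have hg : ∀ n, g n < χ n := by
      intro n
      by_cases h : f β n < χ n <;> simp [hgdef, h, hχpos n]
    obtain ⟨α, hαβ, hgα⟩ := hinter₂ g hg
    obtain ⟨n, hn1, hn2, hn3⟩ := (hcon.and_eventually (hgα.and (hub α hαβ))).exists
    have hgn : g n = f β n := if_pos hn1
    exact absurd ((hgn ▸ hn2).trans hn3) (lt_irrefl _)
  filter_upwards [h1, h2] with n ha hb
  exact le_antisymm ha hb
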